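/- Let L/K be a finite field extension with automorphism group G and fixed field L^G. Then the subalgebra of End_K(L) generated by L and G equals End_{L^G}(L), and it is a central simple L^G-algebra of degree [L : L^G] = |G|. -/

import Mathlib

open Module

/-- Transfer of simplicity along a ring equivalence. -/
lemma isSimpleRing_of_ringEquiv {R S : Type*} [Ring R] [Ring S] (e : R ≃+* S)
    [IsSimpleRing R] : IsSimpleRing S where
  simple := by
    let o : TwoSidedIdeal S ≃o TwoSidedIdeal R :=
      { toFun := fun I => I.comap (e : R →+* S)
        invFun := fun I => I.comap (e.symm : S →+* R)
        left_inv := fun I => by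
          ext x; simp [TwoSidedIdeal.mem_comap]
        right_inv := fun I => by
          ext x; simp [TwoSidedIdeal.mem_comap]
        map_rel_iff' := by
          intro I J
          show I.comap (e : R →+* S) ≤ J.comap (e : R →+* S) ↔ I ≤ J
          constructor
          · intro h x hx
            have h0 : e.symm x ∈ I.comap (e : R →+* S) := by
              rw [TwoSidedIdeal.mem_comap]; simpa using hx
            have h2 := h h0
            rw [TwoSidedIdeal.mem_comap] at h2; simpa using h2
          · intro h x hx
            rw [TwoSidedIdeal.mem_comap] at hx ⊢
            exact h hx }
    exact o.isSimpleOrder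

/-- Dedekind's linear independence of characters, for automorphisms viewed inside
`End_K(L)` with its `L`-module structure. -/
lemma aut_linearIndependent (K L : Type) [Field K] [Field L] [Algebra K L] :
    LinearIndependent L fun g : L ≃ₐ[K] L => (g.toLinearMap : Module.End K L) := by
  have h0 : LinearIndependent L fun g : L ≃ₐ[K] L => ((g : L →* L) : L → L) :=
    (linearIndependent_monoidHom L L).comp (fun g : L ≃ₐ[K] L => (g : L →* L))
      (fun g h hgh => AlgEquiv.ext fun x => DFunLike.congr_fun hgh x)
  let φ : Module.End K L →ₗ[L] (L → L) :=
    { toFun := fun f => ⇑f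
      map_add' := fun f g => rfl
      map_smul' := fun c f => rfl }
  exact LinearIndependent.of_comp φ h0

set_option maxHeartbeats 1000000 in
set_option synthInstance.maxHeartbeats 400000 in
/-- For a finite field extension `L/K` with `G = Aut_K(L)` and fixed field `L^G`, the
subalgebra of `End_K(L)` generated by `L` and `G` equals `End_{L^G}(L)`, it is simple,
its centre is exactly (the image of) `L^G`, and its degree is `[L : L^G] = |G|`. -/
theorem stmt7 (K L : Type) [Field K] [Field L] [Algebra K L] [FiniteDimensional K L] :
    letI F : IntermediateField K L := IntermediateField.fixedField (⊤ : Subgroup (L ≃ₐ[K] L))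
    letI A : Subalgebra K (Module.End K L) := Algebra.adjoin K (Set.range (Algebra.lmul K L) ∪
      Set.range fun g : L ≃ₐ[K] L => (g.toLinearMap : Module.End K L))
    ((A : Set (Module.End K L)) =
        {f : Module.End K L | ∀ m ∈ F, ∀ x : L, f (m * x) = m * f x}) ∧
    IsSimpleRing A ∧
    (∀ f ∈ A, (∀ h ∈ A, f * h = h * f) ↔ ∃ m ∈ F, f = Algebra.lmul K L m) ∧
    Module.finrank F L = Nat.card (L ≃ₐ[K] L) := by
  classical
  set F : IntermediateField K L := IntermediateField.fixedField (⊤ : Subgroup (L ≃ₐ[K] L))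
    with hFdef
  set A : Subalgebra K (Module.End K L) := Algebra.adjoin K (Set.range (Algebra.lmul K L) ∪
      Set.range fun g : L ≃ₐ[K] L => (g.toLinearMap : Module.End K L)) with hAdef
  -- membership in the fixed field
  have hF : ∀ m : L, m ∈ F ↔ ∀ g : L ≃ₐ[K] L, g m = m := by
    intro m
    constructor
    · intro hm g
      exact hm ⟨g, trivial⟩
    · intro hm g
      exact hm g.1
  -- every element of `A` is `F`-semilinear
  have hA_sub : ∀ f ∈ A, ∀ m ∈ F, ∀ x : L, f (m * x) = m * f x := by
    intro f hf
    induction hf using Algebra.adjoin_induction with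
    | mem f hf =>
      rcases hf with hf | hf
      · obtain ⟨c, rfl⟩ := hf
        intro m _ x
        simp [Algebra.coe_lmul_eq_mul, LinearMap.mul_apply', mul_left_comm]
      · obtain ⟨g, rfl⟩ := hf
        intro m hm x
        have := (hF m).1 hm g
        simp [map_mul, this]
    | algebraMap r =>
      intro m _ x
      simp [Module.algebraMap_end_apply, Algebra.mul_smul_comm]
    | add f h _ _ ihf ihh =>
      intro m hm x
      simp [ihf m hm x, ihh m hm x, mul_add]
    | mul f h _ _ ihf ihh =>
      intro m hm x
      simp only [Module.End.mul_apply]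
      rw [ihh m hm x, ihf m hm (h x)]
  -- the restriction-of-scalars map
  let e : (L →ₗ[F] L) →ₗ[F] Module.End K L :=
    { toFun := fun f => f.restrictScalars K
      map_add' := fun f g => rfl
      map_smul' := fun c f => rfl }
  have he_inj : Function.Injective e := LinearMap.restrictScalars_injective K
  -- `A` as an `F`-submodule and an `L`-submodule
  have hsmulL : ∀ (c : L) (f : Module.End K L), c • f = Algebra.lmul K L c * f := by
    intro c f
    ext x
    simp [Algebra.coe_lmul_eq_mul, LinearMap.mul_apply']
  have hsmulF : ∀ (c : F) (f : Module.End K L), c • f = Algebra.lmul K L (c : L) * f := by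
    intro c f
    ext x
    simp only [LinearMap.smul_apply, Module.End.mul_apply, Algebra.coe_lmul_eq_mul,
      LinearMap.mul_apply']
    rfl
  let AF : Submodule F (Module.End K L) :=
    { carrier := (A : Set (Module.End K L))
      add_mem' := fun hf hg => add_mem hf hg
      zero_mem' := zero_mem A
      smul_mem' := fun c f hf => by
        rw [hsmulF c f]
        exact mul_mem (Algebra.subset_adjoin (Or.inl ⟨(c : L), rfl⟩)) hf }
  let AL : Submodule L (Module.End K L) :=
    { carrier := (A : Set (Module.End K L))
      add_mem' := fun hf hg => add_mem hf hg
      zero_mem' := zero_mem A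
      smul_mem' := fun c f hf => by
        rw [hsmulL c f]
        exact mul_mem (Algebra.subset_adjoin (Or.inl ⟨c, rfl⟩)) hf }
  let BF : Submodule F (Module.End K L) := LinearMap.range e
  -- `AF ≤ BF`
  have h1 : AF ≤ BF := by
    intro f hf
    refine ⟨{ toFun := f, map_add' := f.map_add, map_smul' := ?_ }, rfl⟩
    intro m x
    show f ((m : L) * x) = (m : L) * f x
    exact hA_sub f hf (m : L) m.2 x
  -- the span of the automorphisms
  let W : Submodule L (Module.End K L) :=
    Submodule.span L (Set.range fun g : L ≃ₐ[K] L => (g.toLinearMap : Module.End K L))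
  have hWA : W ≤ AL := by
    rw [Submodule.span_le]
    rintro _ ⟨g, rfl⟩
    exact Algebra.subset_adjoin (Or.inr ⟨g, rfl⟩)
  have hWrank : finrank L W = Fintype.card (L ≃ₐ[K] L) :=
    finrank_span_eq_card (aut_linearIndependent K L)
  have hn : finrank F L = Fintype.card (L ≃ₐ[K] L) := by
    rw [hFdef, IntermediateField.finrank_fixedField_eq_card]
    rw [← Nat.card_eq_fintype_card]
    exact Nat.card_congr Subgroup.topEquiv.toEquiv
  have hBFrank : finrank F BF = finrank F L * finrank F L := by
    rw [LinearMap.finrank_range_of_inj he_inj, Module.finrank_linearMap]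
  have hWFrank : finrank F (W.restrictScalars F) = finrank F L * finrank F L := by
    haveI : Module.Free L W := Module.Free.of_divisionRing L W
    have : finrank F L * finrank L W = finrank F (W.restrictScalars F) :=
      Module.finrank_mul_finrank F L W
    rw [← this, hWrank, hn]
  have h2 : AF = BF := by
    refine Submodule.eq_of_le_of_finrank_le h1 ?_
    calc finrank F BF = finrank F (W.restrictScalars F) := by rw [hBFrank, hWFrank]
      _ ≤ finrank F AF := Submodule.finrank_mono (fun x hx => hWA hx)
  -- the set equality
  have hset : ((A : Set (Module.End K L)) =
      {f : Module.End K L | ∀ m ∈ F, ∀ x : L, f (m * x) = m * f x}) := by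
    apply Set.Subset.antisymm
    · intro f hf
      exact hA_sub f hf
    · intro f hf
      have : f ∈ BF := by
        refine ⟨{ toFun := f, map_add' := f.map_add, map_smul' := ?_ }, rfl⟩
        intro m x
        show f ((m : L) * x) = (m : L) * f x
        exact hf (m : L) m.2 x
      rw [← h2] at this
      exact this
  refine ⟨hset, ?_, ?_, ?_⟩
  · -- simplicity
    have h0 : 0 < finrank F L := finrank_pos
    haveI : Nonempty (Fin (finrank F L)) := ⟨⟨0, h0⟩⟩
    haveI : IsSimpleRing (Module.End F L) :=
      isSimpleRing_of_ringEquiv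
        (algEquivMatrix (finBasis F L)).symm.toRingEquiv
    -- build a ring equivalence `Module.End F L ≃+* ↥A`
    have hmem : ∀ f : L →ₗ[F] L, (e f) ∈ A := by
      intro f
      have : e f ∈ BF := ⟨f, rfl⟩
      rw [← h2] at this
      exact this
    let ψ : (Module.End F L) →+* A :=
      { toFun := fun f => ⟨e f, hmem f⟩
        map_one' := rfl
        map_mul' := fun f g => rfl
        map_zero' := rfl
        map_add' := fun f g => rfl }
    have hbij : Function.Bijective ψ := by
      constructor
      · intro f g hfg
        exact he_inj (congrArg Subtype.val hfg)
      · rintro ⟨f, hf⟩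
        have : f ∈ BF := h1 hf
        obtain ⟨g, hg⟩ := this
        exact ⟨g, Subtype.ext hg⟩
    exact isSimpleRing_of_ringEquiv (RingEquiv.ofBijective ψ hbij)
  · -- the centre
    intro f hf
    constructor
    · intro hcomm
      have hlmul : ∀ c : L, f * Algebra.lmul K L c = Algebra.lmul K L c * f := fun c =>
        hcomm _ (Algebra.subset_adjoin (Or.inl ⟨c, rfl⟩))
      have hflin : ∀ x : L, f x = f 1 * x := by
        intro x
        have := congrArg (fun t : Module.End K L => t 1) (hlmul x)
        simp only [Module.End.mul_apply, Algebra.coe_lmul_eq_mul, LinearMap.mul_apply'] at this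
        rw [mul_one] at this
        rw [this, mul_comm]
      have hfix : ∀ g : L ≃ₐ[K] L, g (f 1) = f 1 := by
        intro g
        have hg := hcomm _ (Algebra.subset_adjoin (Or.inr ⟨g, rfl⟩))
        have := congrArg (fun t : Module.End K L => t 1) hg
        simp only [Module.End.mul_apply, AlgEquiv.toLinearMap_apply, map_one] at this
        exact this.symm
      refine ⟨f 1, (hF (f 1)).2 hfix, ?_⟩
      ext x
      simp [Algebra.coe_lmul_eq_mul, LinearMap.mul_apply', hflin x]
    · rintro ⟨m, hm, rfl⟩
      intro h hh
      have := hA_sub h hh m hm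
      ext x
      simp only [Module.End.mul_apply, Algebra.coe_lmul_eq_mul, LinearMap.mul_apply']
      exact (this x).symm
  · -- the degree
    rw [hn, Nat.card_eq_fintype_card]
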